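/- Fix c>0, t>0 and a real p≥1. Then the p-th moment of the radial process, given by the expression E R^p(t) = (λ/c) e^{−λt} ∫₀^{ct} r^{p+1} e^{(λ/c)√(c²t²−r²)} / √(c²t²−r²) dr + (ct)^p e^{−λt}, tends to 0 as λ→∞. -/

import Mathlib

open MeasureTheory Real Filter

lemma aux_rpow_exp {x k q : ℝ} (hx : 0 ≤ x) (hk : 0 < k) (hq : 0 < q) :
    x ^ q ≤ (q / k) ^ q * Real.exp (k * x) := by
  rcases hx.eq_or_lt with h | h
  · rw [← h, Real.zero_rpow hq.ne']
    positivity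
  · have hqk : 0 < q / k := div_pos hq hk
    rw [Real.rpow_def_of_pos h, Real.rpow_def_of_pos hqk, ← Real.exp_add, Real.exp_le_exp]
    have h2 : Real.log x - Real.log (q / k) ≤ x * k / q := by
      have h0 := Real.log_le_sub_one_of_pos (show 0 < x * k / q by positivity)
      have hl : Real.log (x * k / q) = Real.log x - Real.log (q / k) := by
        rw [Real.log_div (by positivity) hq.ne', Real.log_mul h.ne' hk.ne',
          Real.log_div hq.ne' hk.ne']
        ring
      linarith
    have h3 : q * (Real.log x - Real.log (q / k)) ≤ q * (x * k / q) :=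
      mul_le_mul_of_nonneg_left h2 hq.le
    have h4 : q * (x * k / q) = k * x := by field_simp
    nlinarith

lemma integrable_div_sqrt {a C : ℝ} (ha : 0 < a) {h : ℝ → ℝ} (hm : Measurable h)
    (hb : ∀ r ∈ Set.Ioc (0 : ℝ) a, |h r| ≤ C) :
    IntervalIntegrable (fun r => h r / Real.sqrt (a ^ 2 - r ^ 2)) volume 0 a := by
  have hC : 0 ≤ C := le_trans (abs_nonneg _) (hb a ⟨ha, le_refl a⟩)
  have hD : IntervalIntegrable (fun r : ℝ => C / Real.sqrt a * (a - r) ^ (-(1 / 2) : ℝ))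
      volume 0 a := by
    have h1 : IntervalIntegrable (fun x : ℝ => x ^ (-(1 / 2) : ℝ)) volume 0 a :=
      intervalIntegral.intervalIntegrable_rpow' (by norm_num)
    have h2 := (h1.comp_sub_left a).symm
    simp only [sub_zero, sub_self] at h2
    exact h2.const_mul _
  apply hD.mono_fun'
  · apply Measurable.aestronglyMeasurable
    exact hm.div (Real.continuous_sqrt.measurable.comp
      (measurable_const.sub (measurable_id.pow_const 2)))
  · rw [Set.uIoc_of_le ha.le]
    refine (ae_restrict_iff' measurableSet_Ioc).2 (Eventually.of_forall fun r hr => ?_)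
    obtain ⟨hr0, hra⟩ := hr
    rcases eq_or_lt_of_le hra with heq | hlt
    · subst heq
      simp [Real.zero_rpow (by norm_num : (-(1 / 2) : ℝ) ≠ 0)]
    · have hs : 0 < Real.sqrt (a ^ 2 - r ^ 2) := Real.sqrt_pos.2 (by nlinarith)
      have hsr : 0 < a - r := by linarith [hlt]
      have hsplit : (a - r) ^ (-(1 / 2) : ℝ) = (Real.sqrt (a - r))⁻¹ := by
        rw [Real.rpow_neg hsr.le, Real.sqrt_eq_rpow]
      have hlow : Real.sqrt a * Real.sqrt (a - r) ≤ Real.sqrt (a ^ 2 - r ^ 2) := by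
        rw [← Real.sqrt_mul ha.le]
        exact Real.sqrt_le_sqrt (by nlinarith)
      have hpos : 0 < Real.sqrt a * Real.sqrt (a - r) := by positivity
      have key : |h r| / Real.sqrt (a ^ 2 - r ^ 2) ≤ C / (Real.sqrt a * Real.sqrt (a - r)) := by
        apply div_le_div₀ (by exact hC) (hb r ⟨hr0, hra⟩) hpos hlow
      calc ‖h r / Real.sqrt (a ^ 2 - r ^ 2)‖ = |h r| / Real.sqrt (a ^ 2 - r ^ 2) := by
            rw [Real.norm_eq_abs, abs_div, abs_of_nonneg (Real.sqrt_nonneg _)]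
        _ ≤ C / (Real.sqrt a * Real.sqrt (a - r)) := key
        _ = C / Real.sqrt a * (a - r) ^ (-(1 / 2) : ℝ) := by
            rw [hsplit]; field_simp

lemma integral_r_exp {a k : ℝ} (ha : 0 < a) (hk : 0 < k) :
    (∫ r in (0 : ℝ)..a, r * Real.exp (k * Real.sqrt (a ^ 2 - r ^ 2)) / Real.sqrt (a ^ 2 - r ^ 2))
      = (Real.exp (k * a) - 1) / k := by
  have hint : IntervalIntegrable
      (fun r => r * Real.exp (k * Real.sqrt (a ^ 2 - r ^ 2)) / Real.sqrt (a ^ 2 - r ^ 2))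
      volume 0 a := by
    apply integrable_div_sqrt ha (C := a * Real.exp (k * a))
    · exact measurable_id.mul ((Real.continuous_exp.measurable).comp
        ((Real.continuous_sqrt.measurable.comp
          (measurable_const.sub (measurable_id.pow_const 2))).const_mul k))
    · intro r hr
      have hs : Real.sqrt (a ^ 2 - r ^ 2) ≤ a := by
        calc Real.sqrt (a ^ 2 - r ^ 2) ≤ Real.sqrt (a ^ 2) :=
              Real.sqrt_le_sqrt (by nlinarith [hr.1, hr.2])
          _ = a := Real.sqrt_sq ha.le
      have h1 : 0 ≤ r := hr.1.le
      have h2 : r ≤ a := hr.2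
      rw [abs_of_nonneg (by positivity)]
      have := Real.exp_le_exp.2 (mul_le_mul_of_nonneg_left hs hk.le)
      nlinarith [Real.exp_pos (k * Real.sqrt (a ^ 2 - r ^ 2)), Real.exp_pos (k * a)]
  set F : ℝ → ℝ := fun r => -(1 / k) * Real.exp (k * Real.sqrt (a ^ 2 - r ^ 2)) with hF
  have hcont : ContinuousOn F (Set.Icc 0 a) := by
    apply Continuous.continuousOn
    fun_prop
  have hderiv : ∀ x ∈ Set.Ioo (0 : ℝ) a,
      HasDerivAt F (x * Real.exp (k * Real.sqrt (a ^ 2 - x ^ 2)) / Real.sqrt (a ^ 2 - x ^ 2)) x := by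
    intro x hx
    have harg : 0 < a ^ 2 - x ^ 2 := by nlinarith [hx.1, hx.2]
    have hs : 0 < Real.sqrt (a ^ 2 - x ^ 2) := Real.sqrt_pos.2 harg
    have h1 : HasDerivAt (fun r : ℝ => a ^ 2 - r ^ 2) (-(2 * x)) x := by
      simpa using (hasDerivAt_pow 2 x).const_sub (a ^ 2)
    have h2 : HasDerivAt (fun r : ℝ => Real.sqrt (a ^ 2 - r ^ 2))
        (1 / (2 * Real.sqrt (a ^ 2 - x ^ 2)) * -(2 * x)) x :=
      (Real.hasDerivAt_sqrt harg.ne').comp x h1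
    have h3 := ((h2.const_mul k).exp).const_mul (-(1 / k))
    refine HasDerivAt.congr_deriv h3 ?_
    field_simp
  have heval := intervalIntegral.integral_eq_sub_of_hasDeriv_right_of_le ha.le hcont
    (fun x hx => (hderiv x hx).hasDerivWithinAt) hint
  rw [heval, hF]
  norm_num [Real.sqrt_sq ha.le]
  field_simp
  ring

lemma pointwise_bound {a k p : ℝ} (ha : 0 < a) (hk : 0 < k) (hp : 0 < p) :
    ∀ r ∈ Set.Icc (0 : ℝ) a,
      r ^ (p + 1) * Real.exp (2 * k * Real.sqrt (a ^ 2 - r ^ 2)) / Real.sqrt (a ^ 2 - r ^ 2)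
        ≤ (a * p / k) ^ (p / 2) * Real.exp (k * a) *
            (r * Real.exp (k * Real.sqrt (a ^ 2 - r ^ 2)) / Real.sqrt (a ^ 2 - r ^ 2)) := by
  intro r hr
  obtain ⟨hr0, hra⟩ := hr
  have hM : 0 ≤ (a * p / k) ^ (p / 2) := Real.rpow_nonneg (by positivity) _
  rcases eq_or_lt_of_le hra with h | h
  · subst h
    simp
  · set s := Real.sqrt (a ^ 2 - r ^ 2) with hs_def
    have harg : 0 < a ^ 2 - r ^ 2 := by nlinarith
    have hs : 0 < s := Real.sqrt_pos.2 harg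
    have hs2 : s ^ 2 = a ^ 2 - r ^ 2 := Real.sq_sqrt harg.le
    have hsa : s ≤ a := by
      rw [hs_def]
      calc Real.sqrt (a ^ 2 - r ^ 2) ≤ Real.sqrt (a ^ 2) := Real.sqrt_le_sqrt (by nlinarith)
        _ = a := Real.sqrt_sq ha.le
    have key : r ^ p * Real.exp (k * s) ≤ (a * p / k) ^ (p / 2) * Real.exp (k * a) := by
      have hr2 : r ^ 2 ≤ 2 * a * (a - s) := by nlinarith
      have hrp : r ^ p = ((r ^ 2 : ℝ)) ^ (p / 2) := by
        rw [← Real.rpow_natCast r 2, ← Real.rpow_mul hr0]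
        congr 1
        ring
      have h1 : ((r ^ 2 : ℝ)) ^ (p / 2) ≤ (2 * a * (a - s)) ^ (p / 2) :=
        Real.rpow_le_rpow (by positivity) hr2 (by positivity)
      have h2 : (2 * a * (a - s)) ^ (p / 2) = (2 * a) ^ (p / 2) * (a - s) ^ (p / 2) :=
        Real.mul_rpow (by positivity) (by linarith)
      have h3 : (a - s) ^ (p / 2) ≤ (p / 2 / k) ^ (p / 2) * Real.exp (k * (a - s)) :=
        aux_rpow_exp (by linarith) hk (by positivity)
      have h4 : (2 * a) ^ (p / 2) * ((p / 2 / k) ^ (p / 2)) = (a * p / k) ^ (p / 2) := by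
        rw [← Real.mul_rpow (by positivity) (by positivity)]
        congr 1
        field_simp
      have h5 : r ^ p ≤ (a * p / k) ^ (p / 2) * Real.exp (k * (a - s)) := by
        calc r ^ p = ((r ^ 2 : ℝ)) ^ (p / 2) := hrp
          _ ≤ (2 * a) ^ (p / 2) * (a - s) ^ (p / 2) := by rw [← h2]; exact h1
          _ ≤ (2 * a) ^ (p / 2) * ((p / 2 / k) ^ (p / 2) * Real.exp (k * (a - s))) := by
              apply mul_le_mul_of_nonneg_left h3 (by positivity)
          _ = (a * p / k) ^ (p / 2) * Real.exp (k * (a - s)) := by rw [← mul_assoc, h4]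
      calc r ^ p * Real.exp (k * s)
          ≤ (a * p / k) ^ (p / 2) * Real.exp (k * (a - s)) * Real.exp (k * s) := by
            apply mul_le_mul_of_nonneg_right h5 (Real.exp_nonneg _)
        _ = (a * p / k) ^ (p / 2) * Real.exp (k * a) := by
            rw [mul_assoc, ← Real.exp_add]
            ring_nf
    have hnum : r ^ (p + 1) * Real.exp (2 * k * s)
        ≤ (a * p / k) ^ (p / 2) * Real.exp (k * a) * (r * Real.exp (k * s)) := by
      rcases hr0.eq_or_lt with h0 | h0
      · rw [← h0, Real.zero_rpow (by positivity), zero_mul]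
        positivity
      · have hsplit : r ^ (p + 1) = r ^ p * r := by
          rw [Real.rpow_add h0, Real.rpow_one]
        have hexp : Real.exp (2 * k * s) = Real.exp (k * s) * Real.exp (k * s) := by
          rw [← Real.exp_add]; ring_nf
        calc r ^ (p + 1) * Real.exp (2 * k * s)
            = (r ^ p * Real.exp (k * s)) * (r * Real.exp (k * s)) := by
              rw [hsplit, hexp]; ring
          _ ≤ ((a * p / k) ^ (p / 2) * Real.exp (k * a)) * (r * Real.exp (k * s)) := by
              apply mul_le_mul_of_nonneg_right key (by positivity)
    calc r ^ (p + 1) * Real.exp (2 * k * s) / s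
        = r ^ (p + 1) * Real.exp (2 * k * s) * s⁻¹ := by ring
      _ ≤ (a * p / k) ^ (p / 2) * Real.exp (k * a) * (r * Real.exp (k * s)) * s⁻¹ := by
          apply mul_le_mul_of_nonneg_right hnum (by positivity)
      _ = (a * p / k) ^ (p / 2) * Real.exp (k * a) * (r * Real.exp (k * s) / s) := by
          ring

/-- Remark 2.1: the `p`-th moment of the radial process of a planar random flight
tends to `0` as the Poisson rate `λ` tends to infinity. -/
theorem moment_tendsto_zero (c t p : ℝ) (hc : 0 < c) (ht : 0 < t) (hp : 1 ≤ p) :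
    Tendsto
      (fun lam : ℝ =>
        lam / c * Real.exp (-lam * t) *
          (∫ r in (0:ℝ)..(c * t),
            r ^ (p + 1) * Real.exp (lam / c * Real.sqrt (c ^ 2 * t ^ 2 - r ^ 2)) /
              Real.sqrt (c ^ 2 * t ^ 2 - r ^ 2))
        + (c * t) ^ p * Real.exp (-lam * t))
      atTop (nhds 0) := by
  have ha : 0 < c * t := mul_pos hc ht
  have hp0 : 0 < p := lt_of_lt_of_le one_pos hp
  have hsq : c ^ 2 * t ^ 2 = (c * t) ^ 2 := by ring
  simp only [hsq]
  have hB : Tendsto (fun lam : ℝ => (c * t) ^ p * Real.exp (-lam * t)) atTop (nhds 0) := by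
    have h1 : Tendsto (fun lam : ℝ => -lam * t) atTop atBot := by
      have h0 : Tendsto (fun lam : ℝ => lam * t) atTop atTop :=
        Tendsto.atTop_mul_const ht tendsto_id
      have h1 := tendsto_neg_atTop_atBot.comp h0
      simpa [Function.comp_def, neg_mul] using h1
    have h2 := Real.tendsto_exp_atBot.comp h1
    simpa using h2.const_mul ((c * t) ^ p)
  have hA : Tendsto (fun lam : ℝ =>
      lam / c * Real.exp (-lam * t) *
        (∫ r in (0:ℝ)..(c * t),
          r ^ (p + 1) * Real.exp (lam / c * Real.sqrt ((c * t) ^ 2 - r ^ 2)) /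
            Real.sqrt ((c * t) ^ 2 - r ^ 2))) atTop (nhds 0) := by
    have hG : Tendsto (fun lam : ℝ =>
        2 * (2 * (c * t) * p * c) ^ (p / 2) * lam ^ (-(p / 2))) atTop (nhds 0) := by
      have := (tendsto_rpow_neg_atTop (show 0 < p / 2 by positivity)).const_mul
        (2 * (2 * (c * t) * p * c) ^ (p / 2))
      simpa using this
    apply squeeze_zero' ?_ ?_ hG
    · filter_upwards [eventually_gt_atTop (0 : ℝ)] with lam hlam
      apply mul_nonneg (mul_nonneg (by positivity) (Real.exp_nonneg _))
      apply intervalIntegral.integral_nonneg ha.le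
      intro r hr
      exact div_nonneg (mul_nonneg (Real.rpow_nonneg hr.1 _) (Real.exp_nonneg _))
        (Real.sqrt_nonneg _)
    · filter_upwards [eventually_gt_atTop (0 : ℝ)] with lam hlam
      set k := lam / (2 * c) with hk_def
      have hk : 0 < k := by positivity
      have h2k : lam / c = 2 * k := by rw [hk_def]; field_simp
      have hkt : k * (c * t) = lam * t / 2 := by rw [hk_def]; field_simp
      set M := ((c * t) * p / k) ^ (p / 2) with hM_def
      have hM : 0 ≤ M := Real.rpow_nonneg (by positivity) _
      -- integrability of f and g
      have hint_f : IntervalIntegrable (fun r =>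
          r ^ (p + 1) * Real.exp (lam / c * Real.sqrt ((c * t) ^ 2 - r ^ 2)) /
            Real.sqrt ((c * t) ^ 2 - r ^ 2)) volume 0 (c * t) := by
        apply integrable_div_sqrt ha
          (C := (c * t) ^ (p + 1) * Real.exp (lam / c * (c * t)))
        · apply Continuous.measurable
          apply Continuous.mul (Real.continuous_rpow_const (by positivity))
          exact Real.continuous_exp.comp
            (continuous_const.mul
              (Real.continuous_sqrt.comp (continuous_const.sub (continuous_pow 2))))
        · intro r hr
          have hs : Real.sqrt ((c * t) ^ 2 - r ^ 2) ≤ c * t := by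
            calc Real.sqrt ((c * t) ^ 2 - r ^ 2) ≤ Real.sqrt ((c * t) ^ 2) :=
                  Real.sqrt_le_sqrt (by nlinarith [hr.1, hr.2])
              _ = c * t := Real.sqrt_sq ha.le
          rw [abs_of_nonneg (mul_nonneg (Real.rpow_nonneg hr.1.le _) (Real.exp_nonneg _))]
          have h1 : r ^ (p + 1) ≤ (c * t) ^ (p + 1) :=
            Real.rpow_le_rpow hr.1.le hr.2 (by positivity)
          have h2 : Real.exp (lam / c * Real.sqrt ((c * t) ^ 2 - r ^ 2))
              ≤ Real.exp (lam / c * (c * t)) :=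
            Real.exp_le_exp.2 (mul_le_mul_of_nonneg_left hs (by positivity))
          exact mul_le_mul h1 h2 (Real.exp_nonneg _) (Real.rpow_nonneg ha.le _)
      have hint_g : IntervalIntegrable (fun r =>
          r * Real.exp (k * Real.sqrt ((c * t) ^ 2 - r ^ 2)) /
            Real.sqrt ((c * t) ^ 2 - r ^ 2)) volume 0 (c * t) := by
        apply integrable_div_sqrt ha (C := (c * t) * Real.exp (k * (c * t)))
        · apply Continuous.measurable
          apply continuous_id.mul
          exact Real.continuous_exp.comp
            (continuous_const.mul
              (Real.continuous_sqrt.comp (continuous_const.sub (continuous_pow 2))))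
        · intro r hr
          have hs : Real.sqrt ((c * t) ^ 2 - r ^ 2) ≤ c * t := by
            calc Real.sqrt ((c * t) ^ 2 - r ^ 2) ≤ Real.sqrt ((c * t) ^ 2) :=
                  Real.sqrt_le_sqrt (by nlinarith [hr.1, hr.2])
              _ = c * t := Real.sqrt_sq ha.le
          rw [abs_of_nonneg (mul_nonneg hr.1.le (Real.exp_nonneg _))]
          have h2 : Real.exp (k * Real.sqrt ((c * t) ^ 2 - r ^ 2))
              ≤ Real.exp (k * (c * t)) :=
            Real.exp_le_exp.2 (mul_le_mul_of_nonneg_left hs hk.le)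
          exact mul_le_mul hr.2 h2 (Real.exp_nonneg _) ha.le
      -- pointwise bound and monotonicity of the integral
      have hpt := pointwise_bound (a := c * t) (k := k) (p := p) ha hk hp0
      have hmono : (∫ r in (0:ℝ)..(c * t),
            r ^ (p + 1) * Real.exp (lam / c * Real.sqrt ((c * t) ^ 2 - r ^ 2)) /
              Real.sqrt ((c * t) ^ 2 - r ^ 2))
          ≤ ∫ r in (0:ℝ)..(c * t),
              M * Real.exp (k * (c * t)) *
                (r * Real.exp (k * Real.sqrt ((c * t) ^ 2 - r ^ 2)) /
                  Real.sqrt ((c * t) ^ 2 - r ^ 2)) := by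
        apply intervalIntegral.integral_mono_on ha.le hint_f (hint_g.const_mul _)
        intro r hr
        have := hpt r hr
        rw [h2k]
        exact this
      have hval : (∫ r in (0:ℝ)..(c * t),
            M * Real.exp (k * (c * t)) *
              (r * Real.exp (k * Real.sqrt ((c * t) ^ 2 - r ^ 2)) /
                Real.sqrt ((c * t) ^ 2 - r ^ 2)))
          = M * Real.exp (k * (c * t)) * ((Real.exp (k * (c * t)) - 1) / k) := by
        rw [intervalIntegral.integral_const_mul, integral_r_exp ha hk]
      -- combine
      have hIle : (∫ r in (0:ℝ)..(c * t),
            r ^ (p + 1) * Real.exp (lam / c * Real.sqrt ((c * t) ^ 2 - r ^ 2)) /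
              Real.sqrt ((c * t) ^ 2 - r ^ 2))
          ≤ M * Real.exp (k * (c * t)) * ((Real.exp (k * (c * t)) - 1) / k) := by
        rw [← hval]; exact hmono
      have hexp1 : Real.exp (k * (c * t)) - 1 ≤ Real.exp (k * (c * t)) := by linarith
      have step : lam / c * Real.exp (-lam * t) *
          (∫ r in (0:ℝ)..(c * t),
            r ^ (p + 1) * Real.exp (lam / c * Real.sqrt ((c * t) ^ 2 - r ^ 2)) /
              Real.sqrt ((c * t) ^ 2 - r ^ 2))
          ≤ 2 * M := by
        have hpre : 0 ≤ lam / c * Real.exp (-lam * t) := by positivity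
        calc lam / c * Real.exp (-lam * t) * (∫ r in (0:ℝ)..(c * t),
              r ^ (p + 1) * Real.exp (lam / c * Real.sqrt ((c * t) ^ 2 - r ^ 2)) /
                Real.sqrt ((c * t) ^ 2 - r ^ 2))
            ≤ lam / c * Real.exp (-lam * t) *
                (M * Real.exp (k * (c * t)) * ((Real.exp (k * (c * t)) - 1) / k)) :=
              mul_le_mul_of_nonneg_left hIle hpre
          _ ≤ lam / c * Real.exp (-lam * t) *
                (M * Real.exp (k * (c * t)) * (Real.exp (k * (c * t)) / k)) := by
              apply mul_le_mul_of_nonneg_left _ hpre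
              apply mul_le_mul_of_nonneg_left _ (by positivity)
              exact div_le_div_of_nonneg_right hexp1 hk.le
          _ = 2 * M * (Real.exp (-lam * t) * Real.exp (lam * t / 2) * Real.exp (lam * t / 2)) := by
              rw [h2k, hkt]
              field_simp
          _ = 2 * M := by
              rw [← Real.exp_add, ← Real.exp_add,
                show -lam * t + lam * t / 2 + lam * t / 2 = 0 by ring,
                Real.exp_zero, mul_one]
      have hMrw : 2 * M = 2 * (2 * (c * t) * p * c) ^ (p / 2) * lam ^ (-(p / 2)) := by
        rw [hM_def, hk_def]
        rw [show (c * t) * p / (lam / (2 * c)) = (2 * (c * t) * p * c) / lam by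
          field_simp]
        rw [Real.div_rpow (by positivity) hlam.le, Real.rpow_neg hlam.le, div_eq_mul_inv]
        ring
      rw [hMrw] at step
      exact step
  simpa using hA.add hB
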